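/- For fixed m, the proportion of voting situations with n agents on A having more than one Tideman winner tends to 0 as n → ∞, and likewise the proportion of voting situations with n agents having more than one Dodgson winner tends to 0 as n → ∞. -/

import Mathlib

open Finset Filter

/-- A vote (strict linear order) on `m` alternatives, encoded by its position map:
`v x` is the position of alternative `x`, position `0` being the top.
`v` ranks `x` above `y` iff `v x < v y`. -/
abbrev Vote (m : ℕ) := Equiv.Perm (Fin m)

/-- A profile is a list of `n` votes, one per agent. -/
abbrev Profile (m n : ℕ) := Fin n → Vote m

/-- `n_{xy}[P]`: the number of votes in `P` ranking `x` above `y`. -/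
def nAbove {m n : ℕ} (P : Profile m n) (x y : Fin m) : ℕ :=
  (Finset.univ.filter (fun i => P i x < P i y)).card

/-- `adv[P](x,y) = max (0, n_{xy} - n_{yx})` (truncated subtraction on `ℕ`). -/
def adv {m n : ℕ} (P : Profile m n) (x y : Fin m) : ℕ :=
  nAbove P x y - nAbove P y x

/-- The Tideman score `Sc_T[P](a) = Σ_{b ≠ a} adv[P](b,a)`. -/
def ScT {m n : ℕ} (P : Profile m n) (a : Fin m) : ℕ :=
  ∑ b ∈ Finset.univ.filter (fun b => b ≠ a), adv P b a

/-- The Dodgson Quick score `Sc_Q[P](a) = Σ_{b ≠ a} ⌈adv[P](b,a)/2⌉`. -/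
def ScQ {m n : ℕ} (P : Profile m n) (a : Fin m) : ℕ :=
  ∑ b ∈ Finset.univ.filter (fun b => b ≠ a), (adv P b a + 1) / 2

/-- `a` is a Condorcet-tie winner of `P` iff `adv[P](b,a) = 0` for all `b ≠ a`. -/
def CondorcetTieWinner {m n : ℕ} (P : Profile m n) (a : Fin m) : Prop :=
  ∀ b, b ≠ a → adv P b a = 0

/-- `a` is a Condorcet winner of `P` iff `adv[P](a,b) > 0` for all `b ≠ a`. -/
def CondorcetWinner {m n : ℕ} (P : Profile m n) (a : Fin m) : Prop :=
  ∀ b, b ≠ a → 0 < adv P a b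

/-- `w` is obtained from the vote `v` by one swap of neighbouring alternatives
(the alternatives at consecutive positions `p` and `p+1` are exchanged). -/
def AdjSwapVote {m : ℕ} (v w : Vote m) : Prop :=
  ∃ p q : Fin m, (q : ℕ) = (p : ℕ) + 1 ∧ w = v.trans (Equiv.swap p q)

/-- `Q` is obtained from the profile `P` by one adjacent swap in one vote. -/
def AdjSwap {m n : ℕ} (P Q : Profile m n) : Prop :=
  ∃ i : Fin n, AdjSwapVote (P i) (Q i) ∧ ∀ j, j ≠ i → Q j = P j

/-- `Reach r k P Q`: `Q` can be obtained from `P` by exactly `k` steps of `r`. -/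
def Reach {α : Type*} (r : α → α → Prop) : ℕ → α → α → Prop
  | 0, P, Q => P = Q
  | (k+1), P, Q => ∃ R, r P R ∧ Reach r k R Q

/-- The Dodgson score `Sc_D[P](a)`: the minimum number of adjacent swaps needed to
transform `P` into a profile in which `a` is a Condorcet-tie winner. -/
noncomputable def ScD {m n : ℕ} (P : Profile m n) (a : Fin m) : ℕ :=
  sInf {k | ∃ Q, Reach AdjSwap k P Q ∧ CondorcetTieWinner Q a}

/-- Variant of the Dodgson score requiring `a` to become a Condorcet winner. -/
noncomputable def ScD' {m n : ℕ} (P : Profile m n) (a : Fin m) : ℕ :=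
  sInf {k | ∃ Q, Reach AdjSwap k P Q ∧ CondorcetWinner Q a}

/- Voting situations: multisets of votes.  Scores depend only on the voting
situation of a profile, so we define them directly on multisets. -/

/-- Number of votes in the voting situation `S` ranking `x` above `y`. -/
def snAbove {m : ℕ} (S : Multiset (Vote m)) (x y : Fin m) : ℕ :=
  (S.filter (fun v => v x < v y)).card

def sadv {m : ℕ} (S : Multiset (Vote m)) (x y : Fin m) : ℕ :=
  snAbove S x y - snAbove S y x

/-- Tideman score of a voting situation. -/
def sScT {m : ℕ} (S : Multiset (Vote m)) (a : Fin m) : ℕ :=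
  ∑ b ∈ Finset.univ.filter (fun b => b ≠ a), sadv S b a

/-- Dodgson Quick score of a voting situation. -/
def sScQ {m : ℕ} (S : Multiset (Vote m)) (a : Fin m) : ℕ :=
  ∑ b ∈ Finset.univ.filter (fun b => b ≠ a), (sadv S b a + 1) / 2

def sCondorcetTieWinner {m : ℕ} (S : Multiset (Vote m)) (a : Fin m) : Prop :=
  ∀ b, b ≠ a → sadv S b a = 0

/-- One adjacent swap applied to one vote of a voting situation. -/
def sAdjSwap {m : ℕ} (S T : Multiset (Vote m)) : Prop :=
  ∃ v ∈ S, ∃ w, AdjSwapVote v w ∧ T = w ::ₘ S.erase v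

/-- Dodgson score of a voting situation. -/
noncomputable def sScD {m : ℕ} (S : Multiset (Vote m)) (a : Fin m) : ℕ :=
  sInf {k | ∃ T, Reach sAdjSwap k S T ∧ sCondorcetTieWinner T a}

/-- `a` is a Tideman winner (minimal Tideman score). -/
def sTWinner {m : ℕ} (S : Multiset (Vote m)) (a : Fin m) : Prop :=
  ∀ b, sScT S a ≤ sScT S b

/-- `a` is a DQ winner (minimal DQ score). -/
def sQWinner {m : ℕ} (S : Multiset (Vote m)) (a : Fin m) : Prop :=
  ∀ b, sScQ S a ≤ sScQ S b

/-- `a` is a Dodgson winner (minimal Dodgson score). -/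
def sDWinner {m : ℕ} (S : Multiset (Vote m)) (a : Fin m) : Prop :=
  ∀ b, sScD S a ≤ sScD S b

namespace Stmt10
variable {m : ℕ}
def covers (a : Fin m) (p : Vote m × ℕ) (b : Fin m) : Prop :=
  p.1 b < p.1 a ∧ (p.1 a : ℕ) ≤ (p.1 b : ℕ) + p.2
instance (a : Fin m) (p : Vote m × ℕ) (b : Fin m) : Decidable (covers a p b) := by
  unfold covers; infer_instance
def planCov (a : Fin m) (P : Multiset (Vote m × ℕ)) (b : Fin m) : ℕ :=
  (P.filter (fun p => covers a p b)).card
def cost (P : Multiset (Vote m × ℕ)) : ℕ := (P.map Prod.snd).sum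
def Feasible (S : Multiset (Vote m)) (a : Fin m) (P : Multiset (Vote m × ℕ)) : Prop :=
  P.map Prod.fst = S ∧ ∀ b, b ≠ a → snAbove S b a ≤ snAbove S a b + 2 * planCov a P b
noncomputable def cover (S : Multiset (Vote m)) (a : Fin m) : ℕ :=
  sInf {c | ∃ P, Feasible S a P ∧ cost P = c}
lemma snAbove_cons (v : Vote m) (S : Multiset (Vote m)) (x y : Fin m) :
    snAbove (v ::ₘ S) x y = (if v x < v y then 1 else 0) + snAbove S x y := by
  simp [snAbove, Multiset.filter_cons]
  split <;> simp
lemma planCov_cons (a : Fin m) (p : Vote m × ℕ) (P : Multiset (Vote m × ℕ)) (b : Fin m) :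
    planCov a (p ::ₘ P) b = (if covers a p b then 1 else 0) + planCov a P b := by
  simp [planCov, Multiset.filter_cons]
  split <;> simp
lemma cost_cons (p : Vote m × ℕ) (P : Multiset (Vote m × ℕ)) :
    cost (p ::ₘ P) = p.2 + cost P := by
  simp [cost]
lemma snAbove_add_snAbove (S : Multiset (Vote m)) {x y : Fin m} (h : x ≠ y) :
    snAbove S x y + snAbove S y x = Multiset.card S := by
  classical
  induction S using Multiset.induction_on with
  | empty => simp [snAbove]
  | cons v S ih =>
    rw [snAbove_cons, snAbove_cons]
    have : v x ≠ v y := fun hc => h (v.injective hc)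
    rcases lt_or_gt_of_ne this with h1 | h1
    · simp [h1, not_lt.mpr h1.le]; omega
    · simp [h1, not_lt.mpr h1.le]; omega
lemma map_eq_cons_decomp {α β : Type*} [DecidableEq α] {f : α → β} {P : Multiset α} {b : β}
    {M : Multiset β} (h : P.map f = b ::ₘ M) :
    ∃ p P₀, P = p ::ₘ P₀ ∧ f p = b ∧ P₀.map f = M := by
  have hb : b ∈ P.map f := by rw [h]; exact Multiset.mem_cons_self _ _
  rcases Multiset.mem_map.mp hb with ⟨p, hp, hfp⟩
  refine ⟨p, P.erase p, (Multiset.cons_erase hp).symm, hfp, ?_⟩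
  have h2 : (p ::ₘ P.erase p).map f = b ::ₘ M := by rw [Multiset.cons_erase hp, h]
  rw [Multiset.map_cons, hfp] at h2
  exact (Multiset.cons_inj_right b).mp h2

-- NEW PART
lemma feasible_full (S : Multiset (Vote m)) (a : Fin m) :
    Feasible S a (S.map (fun v => (v, m))) := by
  constructor
  · rw [Multiset.map_map]; simp
  · intro b hb
    have hcov : planCov a (S.map (fun v => (v, m))) b = snAbove S b a := by
      induction S using Multiset.induction_on with
      | empty => simp [planCov, snAbove]
      | cons v S ih =>
        rw [Multiset.map_cons, planCov_cons, snAbove_cons, ih]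
        congr 1
        have : covers a (v, m) b ↔ v b < v a := by
          unfold covers
          simp only [and_iff_left_iff_imp]
          intro _
          exact le_trans (le_of_lt (Fin.is_lt _)) (Nat.le_add_left _ _)
        simp [this]
    rw [hcov]; omega
lemma cover_set_nonempty (S : Multiset (Vote m)) (a : Fin m) :
    {c | ∃ P, Feasible S a P ∧ cost P = c}.Nonempty :=
  ⟨_, ⟨_, feasible_full S a, rfl⟩⟩
lemma cover_le {S : Multiset (Vote m)} {a : Fin m} {P} (h : Feasible S a P) :
    cover S a ≤ cost P := Nat.sInf_le ⟨P, h, rfl⟩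
lemma cover_spec (S : Multiset (Vote m)) (a : Fin m) :
    ∃ P, Feasible S a P ∧ cost P = cover S a := Nat.sInf_mem (cover_set_nonempty S a)
lemma ct_iff {S : Multiset (Vote m)} {a : Fin m} :
    sCondorcetTieWinner S a ↔ ∀ b, b ≠ a → snAbove S b a ≤ snAbove S a b := by
  unfold sCondorcetTieWinner sadv
  constructor <;> intro h b hb <;> have := h b hb <;> omega
lemma cover_eq_zero_of_ct {S : Multiset (Vote m)} {a : Fin m}
    (h : sCondorcetTieWinner S a) : cover S a = 0 := by
  have hf : Feasible S a (S.map (fun v => (v, 0))) := by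
    constructor
    · rw [Multiset.map_map]; simp
    · intro b hb
      have := (ct_iff.mp h) b hb
      omega
  have := cover_le hf
  have hc : cost (S.map (fun v => (v, 0))) = 0 := by
    simp [cost, Multiset.map_map]
  omega
lemma exists_pos_snd {P : Multiset (Vote m × ℕ)} (h : cost P ≠ 0) :
    ∃ p ∈ P, 1 ≤ p.2 := by
  by_contra hc
  push_neg at hc
  apply h
  simp only [cost]
  rw [Multiset.sum_eq_zero]
  intro x hx
  rcases Multiset.mem_map.mp hx with ⟨p, hp, rfl⟩
  have := hc p hp; omega
lemma reach_of_feasible (a : Fin m) :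
    ∀ C (S : Multiset (Vote m)) P, Feasible S a P → cost P = C →
      ∃ k ≤ C, ∃ Q, Reach sAdjSwap k S Q ∧ sCondorcetTieWinner Q a := by
  intro C
  induction C using Nat.strong_induction_on with
  | _ C IH =>
  intro S P hF hC
  rcases Nat.eq_zero_or_pos C with rfl | hCpos
  · -- cost 0: S itself is a CT profile
    refine ⟨0, le_refl _, S, rfl, ?_⟩
    rw [ct_iff]
    intro b hb
    have h2 := hF.2 b hb
    have hcov : planCov a P b = 0 := by
      unfold planCov
      rw [Multiset.card_eq_zero, Multiset.filter_eq_nil]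
      intro p hp hcovp
      have hp2 : p.2 = 0 := by
        by_contra hne
        have : cost P ≠ 0 := by
          have : p.2 ≤ cost P := by
            unfold cost
            exact Multiset.le_sum_of_mem (Multiset.mem_map_of_mem _ hp)
          omega
        omega
      rcases hcovp with ⟨hlt, hle⟩
      rw [hp2] at hle
      have : (p.1 b : ℕ) < (p.1 a : ℕ) := hlt
      omega
    rw [hcov] at h2; omega
  · -- cost ≥ 1
    obtain ⟨p, hpP, hp2⟩ := exists_pos_snd (by omega : cost P ≠ 0)
    obtain ⟨v, k⟩ := p
    simp only at hp2
    set P₀ := P.erase (v, k) with hP₀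
    have hPdec : P = (v, k) ::ₘ P₀ := (Multiset.cons_erase hpP).symm
    set S₀ := P₀.map Prod.fst with hS₀
    have hSdec : S = v ::ₘ S₀ := by
      rw [← hF.1, hPdec, Multiset.map_cons]
    by_cases hva : (v a : ℕ) = 0
    · -- a already on top of v : drop k to 0
      have hF' : Feasible S a ((v, 0) ::ₘ P₀) := by
        constructor
        · rw [Multiset.map_cons, ← hS₀, hSdec]
        · intro b hb
          have h2 := hF.2 b hb
          have hcv : ∀ k' : ℕ, ¬ covers a (v, k') b := by
            intro k' ⟨hlt, _⟩
            have : (v b : ℕ) < (v a : ℕ) := hlt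
            omega
          have e1 : planCov a ((v, 0) ::ₘ P₀) b = planCov a P b := by
            rw [hPdec, planCov_cons, planCov_cons, if_neg (hcv 0), if_neg (hcv k)]
          rw [e1]; exact h2
      have hcost : cost ((v, 0) ::ₘ P₀) < C := by
        rw [cost_cons]
        rw [hPdec, cost_cons] at hC
        simp only at hC ⊢
        omega
      obtain ⟨k', hk', Q, hQ, hQa⟩ := IH _ hcost S _ hF' rfl
      exact ⟨k', by omega, Q, hQ, hQa⟩
    · -- perform one raising swap in v
      have hm2 : (v a : ℕ) < m := Fin.is_lt _
      set pa : ℕ := (v a : ℕ) with hpa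
      have hpa1 : 1 ≤ pa := by omega
      set p1 : Fin m := ⟨pa - 1, by omega⟩ with hp1
      have hp1v : (p1 : ℕ) = pa - 1 := rfl
      have hp1q1 : p1 ≠ v a := by
        intro h
        have := congrArg Fin.val h
        rw [hp1v] at this
        omega
      set c : Fin m := v.symm p1 with hc
      have hvc : v c = p1 := Equiv.apply_symm_apply v p1
      have hvc' : (v c : ℕ) = pa - 1 := by rw [hvc]
      have hca : c ≠ a := by
        intro h
        rw [h] at hvc
        exact hp1q1 hvc.symm
      set w : Vote m := v.trans (Equiv.swap p1 (v a)) with hw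
      have hwa : w a = p1 := by
        simp [hw, Equiv.trans_apply, Equiv.swap_apply_right]
      have hwa' : (w a : ℕ) = pa - 1 := by rw [hwa]
      have hwc' : (w c : ℕ) = pa := by
        simp [hw, Equiv.trans_apply, hvc, Equiv.swap_apply_left]
        exact hpa.symm
      have hwb : ∀ b, b ≠ a → b ≠ c → w b = v b := by
        intro b hba hbc
        have h1 : v b ≠ p1 := by
          intro h
          apply hbc
          rw [hc, ← h]; simp
        have h2 : v b ≠ v a := fun h => hba (v.injective h)
        simp [hw, Equiv.trans_apply, Equiv.swap_apply_of_ne_of_ne h1 h2]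
      have hadj : AdjSwapVote v w := ⟨p1, v a, by rw [hp1v]; omega, rfl⟩
      set T : Multiset (Vote m) := w ::ₘ S₀ with hT
      have hstep : sAdjSwap S T := by
        refine ⟨v, by rw [hSdec]; exact Multiset.mem_cons_self _ _, w, hadj, ?_⟩
        rw [hSdec, Multiset.erase_cons_head]
      have hF' : Feasible T a ((w, k - 1) ::ₘ P₀) := by
        constructor
        · rw [Multiset.map_cons, ← hS₀, hT]
        · intro b hb
          have h2 := hF.2 b hb
          rw [hPdec, planCov_cons] at h2
          rw [hSdec, snAbove_cons, snAbove_cons] at h2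
          rw [planCov_cons, hT, snAbove_cons, snAbove_cons]
          by_cases hbc : b = c
          · rw [hbc] at h2 hb ⊢
            clear hbc
            have hcv : covers a (v, k) c := by
              constructor
              · show v c < v a
                rw [Fin.lt_def, hvc']; omega
              · show (v a : ℕ) ≤ (v c : ℕ) + k
                rw [hvc']; omega
            have hvblt : v c < v a := hcv.1
            have hwcov : ¬ covers a (w, k - 1) c := by
              intro hcov
              have : w c < w a := hcov.1
              rw [Fin.lt_def, hwc', hwa'] at this
              omega
            have hwblt : ¬ (w c < w a) := by
              rw [Fin.lt_def, hwc', hwa']; omega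
            have hwgt : w a < w c := by
              rw [Fin.lt_def, hwc', hwa']; omega
            have hvgt : ¬ (v a < v c) := by
              rw [Fin.lt_def, hvc']; omega
            rw [if_pos hcv, if_pos hvblt, if_neg hvgt] at h2
            rw [if_neg hwcov, if_neg hwblt, if_pos hwgt]
            omega
          · have hwbv : w b = v b := hwb b hb hbc
            have hvbp1' : (v b : ℕ) ≠ pa - 1 := by
              intro h
              apply hbc
              have : v b = p1 := Fin.ext (by rw [hp1v, h])
              rw [hc, ← this]; simp
            have hvbq1' : (v b : ℕ) ≠ pa := by
              intro h
              apply hb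
              apply v.injective
              exact Fin.ext (by rw [h])
            have e1 : (w b < w a) ↔ (v b < v a) := by
              rw [Fin.lt_def, Fin.lt_def, hwbv, hwa', ← hpa]; omega
            have e2 : (w a < w b) ↔ (v a < v b) := by
              rw [Fin.lt_def, Fin.lt_def, hwbv, hwa', ← hpa]; omega
            have e3 : covers a (w, k - 1) b ↔ covers a (v, k) b := by
              unfold covers
              simp only [hwbv, hwa', ← hpa, Fin.lt_def]
              omega
            simp only [e1, e2, e3]
            exact h2
      have hcost : cost ((w, k - 1) ::ₘ P₀) = C - 1 := by
        rw [cost_cons]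
        rw [hPdec, cost_cons] at hC
        simp only at hC ⊢
        omega
      obtain ⟨k', hk', Q, hQ, hQa⟩ := IH (C - 1) (by omega) T _ hF' hcost
      exact ⟨k' + 1, by omega, Q, ⟨T, hstep, hQ⟩, hQa⟩

lemma sScD_le_cover (S : Multiset (Vote m)) (a : Fin m) : sScD S a ≤ cover S a := by
  obtain ⟨P, hF, hc⟩ := cover_spec S a
  obtain ⟨k, hk, Q, hQ, hQa⟩ := reach_of_feasible a (cover S a) S P hF hc
  exact le_trans (Nat.sInf_le ⟨Q, hQ, hQa⟩) hk

set_option maxHeartbeats 2000000 in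
lemma cover_le_of_swap {S T : Multiset (Vote m)} (a : Fin m) (h : sAdjSwap S T) :
    cover S a ≤ cover T a + 1 := by
  classical
  obtain ⟨v, hvS, w, ⟨p, q, hpq, hw⟩, hT⟩ := h
  obtain ⟨P, hF, hcost⟩ := cover_spec T a
  rw [hT] at hF
  obtain ⟨pw, P₀, hPdec, hfst, hP₀⟩ := map_eq_cons_decomp hF.1
  have hpw : pw = (w, pw.2) := Prod.ext hfst rfl
  set k := pw.2 with hk
  have hSdec : S = v ::ₘ S.erase v := (Multiset.cons_erase hvS).symm
  have hw_val : ∀ z, (w z : ℕ) =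
      if (v z : ℕ) = (p : ℕ) then (q : ℕ) else if (v z : ℕ) = (q : ℕ) then (p : ℕ)
        else (v z : ℕ) := by
    intro z
    have h1 : w z = if v z = p then q else if v z = q then p else v z := by
      rw [hw]; simp only [Equiv.trans_apply, Equiv.swap_apply_def]
    rw [h1, apply_ite Fin.val, apply_ite Fin.val]
    simp only [Fin.ext_iff]
  have hpqne : (p : ℕ) ≠ (q : ℕ) := by omega
  have feas : Feasible S a ((v, k + 1) ::ₘ P₀) := by
    refine ⟨by rw [Multiset.map_cons, hP₀, ← hSdec], ?_⟩
    intro b hb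
    have h2 := hF.2 b hb
    rw [hPdec, hpw, planCov_cons, snAbove_cons, snAbove_cons] at h2
    rw [hSdec, planCov_cons, snAbove_cons, snAbove_cons]
    have hvne : (v b : ℕ) ≠ (v a : ℕ) := by
      intro hcontra
      exact hb (v.injective (Fin.ext hcontra))
    have hwa := hw_val a
    have hwb := hw_val b
    simp only [covers, Fin.lt_def] at h2 ⊢
    split_ifs at hwa hwb <;> split_ifs at h2 ⊢ <;> omega
  calc cover S a ≤ cost ((v, k + 1) ::ₘ P₀) := cover_le feas
    _ = cover T a + 1 := by
        rw [hPdec, hpw, cost_cons] at hcost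
        rw [cost_cons]
        simp only at hcost ⊢
        omega

lemma cover_le_reach {a : Fin m} :
    ∀ k (S Q : Multiset (Vote m)), Reach sAdjSwap k S Q → sCondorcetTieWinner Q a →
      cover S a ≤ k := by
  intro k
  induction k with
  | zero =>
    intro S Q hr hct
    have : S = Q := hr
    rw [this]
    simp [cover_eq_zero_of_ct hct]
  | succ k ih =>
    intro S Q hr hct
    obtain ⟨R, hSR, hRQ⟩ := hr
    have := ih R Q hRQ hct
    have := cover_le_of_swap a hSR
    omega

lemma cover_eq_sScD (S : Multiset (Vote m)) (a : Fin m) : cover S a = sScD S a := by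
  apply le_antisymm
  · have hne : {k | ∃ T, Reach sAdjSwap k S T ∧ sCondorcetTieWinner T a}.Nonempty := by
      obtain ⟨P, hF, hc⟩ := cover_spec S a
      obtain ⟨k, _, Q, hQ, hQa⟩ := reach_of_feasible a (cover S a) S P hF hc
      exact ⟨k, Q, hQ, hQa⟩
    obtain ⟨Q, hQ, hQa⟩ := Nat.sInf_mem hne
    exact cover_le_reach _ S Q hQ hQa
  · exact sScD_le_cover S a

def topV [NeZero m] (x : Fin m) : Vote m := Equiv.swap x 0

noncomputable def botV [NeZero m] (x : Fin m) : Vote m := (Equiv.swap x 0).trans (finRotate m).symm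

lemma finRotate_symm_val {j : Fin m} (hj : 1 ≤ (j : ℕ)) :
    (((finRotate m).symm j : Fin m) : ℕ) = (j : ℕ) - 1 := by
  obtain ⟨n, rfl⟩ : ∃ n, m = n + 1 := ⟨m - 1, by omega⟩
  rcases Nat.eq_zero_or_pos n with rfl | hn
  · have := j.is_lt; omega
  have hlt : (j : ℕ) - 1 < n + 1 := by have := j.is_lt; omega
  have h1 : finRotate (n+1) ⟨(j : ℕ) - 1, hlt⟩ = j := by
    rw [finRotate_succ_apply]
    apply Fin.ext
    rw [Fin.val_add]
    have hv1 : ((1 : Fin (n+1)) : ℕ) = 1 := by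
      rw [Fin.val_one']
      exact Nat.mod_eq_of_lt (by omega)
    rw [hv1]
    simp only
    rw [Nat.mod_eq_of_lt (by have := j.is_lt; omega)]
    omega
  have h2 : (finRotate (n+1)).symm j = ⟨(j : ℕ) - 1, hlt⟩ := by
    rw [Equiv.symm_apply_eq]; exact h1.symm
  rw [h2]

lemma finRotate_symm_zero (hm : 1 ≤ m) {j : Fin m} (hj : (j : ℕ) = 0) :
    (((finRotate m).symm j : Fin m) : ℕ) = m - 1 := by
  obtain ⟨n, rfl⟩ : ∃ n, m = n + 1 := ⟨m - 1, by omega⟩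
  have hj' : j = 0 := Fin.ext (by simpa using hj)
  have : finRotate (n+1) (Fin.last n) = 0 := finRotate_last
  rw [hj', ← this, Equiv.symm_apply_apply]
  simp [Fin.last]

lemma topV_self [NeZero m] (x : Fin m) : ((topV x x : Fin m) : ℕ) = 0 := by
  simp [topV, Equiv.swap_apply_left]

lemma topV_pos {x b : Fin m} [NeZero m] (h : b ≠ x) : 1 ≤ ((topV x b : Fin m) : ℕ) := by
  have hne : topV x b ≠ topV x x := fun hc => h ((topV x).injective hc)
  have h0 : ((topV x x : Fin m) : ℕ) = 0 := topV_self x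
  have hv : ((topV x b : Fin m) : ℕ) ≠ ((topV x x : Fin m) : ℕ) := fun hc => hne (Fin.ext hc)
  omega

lemma botV_self [NeZero m] (x : Fin m) : ((botV x x : Fin m) : ℕ) = m - 1 := by
  have h0 : ((Equiv.swap x 0) x : ℕ) = 0 := by simp [Equiv.swap_apply_left]
  rw [botV]
  simp only [Equiv.trans_apply]
  exact finRotate_symm_zero (Nat.pos_of_ne_zero (NeZero.ne m)) h0

lemma botV_val {x b : Fin m} [NeZero m] (h : b ≠ x) :
    ((botV x b : Fin m) : ℕ) = ((topV x b : Fin m) : ℕ) - 1 := by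
  rw [botV, topV]
  simp only [Equiv.trans_apply]
  exact finRotate_symm_val (topV_pos h)

lemma topV_lt_iff {x b c : Fin m} [NeZero m] (hb : b ≠ x) (hc : c ≠ x) :
    (topV x b < topV x c) ↔ (botV x b < botV x c) := by
  rw [Fin.lt_def, Fin.lt_def, botV_val hb, botV_val hc]
  have := topV_pos hb (x := x)
  have := topV_pos hc (x := x)
  omega

lemma topV_ne_botV [NeZero m] (x : Fin m) (hm : 2 ≤ m) : topV x ≠ botV x := by
  intro h
  have hv : ((topV x x : Fin m) : ℕ) = ((botV x x : Fin m) : ℕ) := by rw [h]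
  rw [topV_self, botV_self] at hv
  omega

lemma covers_snd_zero {a b : Fin m} {p : Vote m × ℕ} (h : p.2 = 0) : ¬ covers a p b := by
  intro ⟨h1, h2⟩
  rw [h] at h2
  have : (p.1 b : ℕ) < (p.1 a : ℕ) := h1
  omega

lemma ct_of_cover_eq_zero {S : Multiset (Vote m)} {a : Fin m} (h : cover S a = 0) :
    sCondorcetTieWinner S a := by
  obtain ⟨P, hF, hc⟩ := cover_spec S a
  obtain ⟨k, hk, Q, hQ, hQa⟩ := reach_of_feasible a 0 S P hF (hc.trans h)
  interval_cases k
  have hSQ : S = Q := hQ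
  rw [hSQ]
  exact hQa

section Surgery

variable [NeZero m] (hm : 2 ≤ m) {x : Fin m}

lemma cmp_top {b : Fin m} (h : b ≠ x) :
    (topV x x < topV x b) ∧ ¬(topV x b < topV x x) := by
  have h1 := topV_self (m := m) x
  have h2 := topV_pos (m := m) h
  constructor <;> simp only [Fin.lt_def] <;> omega

lemma cmp_bot {b : Fin m} (h : b ≠ x) :
    (botV x b < botV x x) ∧ ¬(botV x x < botV x b) := by
  have h1 := botV_self (m := m) x
  have h2 := botV_val (m := m) h
  have h3 := topV_pos (m := m) h
  have h4 : ((topV x b : Fin m) : ℕ) < m := Fin.is_lt _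
  constructor <;> simp only [Fin.lt_def] <;> omega

include hm

lemma cover_topV_le (R : Multiset (Vote m)) :
    cover (topV x ::ₘ R) x ≤ cover (botV x ::ₘ R) x := by
  obtain ⟨P, hF, hc⟩ := cover_spec (botV x ::ₘ R) x
  obtain ⟨p₁, P₀, hPdec, hfst, hP₀⟩ := map_eq_cons_decomp hF.1
  have feas : Feasible (topV x ::ₘ R) x ((topV x, 0) ::ₘ P₀) := by
    refine ⟨by rw [Multiset.map_cons, hP₀], ?_⟩
    intro b hb
    have h2 := hF.2 b hb
    rw [hPdec, planCov_cons, snAbove_cons, snAbove_cons] at h2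
    rw [planCov_cons, snAbove_cons, snAbove_cons]
    rw [if_pos (cmp_bot hb).1, if_neg (cmp_bot hb).2] at h2
    rw [if_neg (cmp_top hb).2, if_pos (cmp_top hb).1]
    split_ifs at h2 ⊢ <;> omega
  calc cover (topV x ::ₘ R) x ≤ cost ((topV x, 0) ::ₘ P₀) := cover_le feas
    _ ≤ cost P := by rw [hPdec, cost_cons, cost_cons]; omega
    _ = _ := hc

lemma cover_topV_lt (R : Multiset (Vote m))
    (hpos : 1 ≤ cover (botV x ::ₘ R) x) :
    cover (topV x ::ₘ R) x + 1 ≤ cover (botV x ::ₘ R) x := by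
  obtain ⟨P, hF, hc⟩ := cover_spec (botV x ::ₘ R) x
  obtain ⟨p₁, P₀, hPdec, hfst, hP₀⟩ := map_eq_cons_decomp hF.1
  by_cases hk : 1 ≤ p₁.2
  · have feas : Feasible (topV x ::ₘ R) x ((topV x, 0) ::ₘ P₀) := by
      refine ⟨by rw [Multiset.map_cons, hP₀], ?_⟩
      intro b hb
      have h2 := hF.2 b hb
      rw [hPdec, planCov_cons, snAbove_cons, snAbove_cons] at h2
      rw [planCov_cons, snAbove_cons, snAbove_cons]
      rw [if_pos (cmp_bot hb).1, if_neg (cmp_bot hb).2] at h2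
      rw [if_neg (cmp_top hb).2, if_pos (cmp_top hb).1]
      split_ifs at h2 ⊢ <;> omega
    have hcost : cost ((topV x, 0) ::ₘ P₀) + 1 ≤ cost P := by
      rw [hPdec, cost_cons, cost_cons]; omega
    have := cover_le feas
    omega
  · have hk0 : p₁.2 = 0 := by omega
    have hcostP : cost P = cost P₀ := by rw [hPdec, cost_cons, hk0]; omega
    have hpos₀ : cost P₀ ≠ 0 := by rw [← hcostP, hc]; omega
    obtain ⟨p₂, hp₂, hp₂pos⟩ := exists_pos_snd hpos₀
    have hP₀dec : P₀ = p₂ ::ₘ P₀.erase p₂ := (Multiset.cons_erase hp₂).symm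
    set P₁ := P₀.erase p₂ with hP₁
    have hRdec : R = p₂.1 ::ₘ P₁.map Prod.fst := by
      rw [← hP₀, hP₀dec, Multiset.map_cons]
    have feas : Feasible (topV x ::ₘ R) x
        ((topV x, 0) ::ₘ (p₂.1, p₂.2 - 1) ::ₘ P₁) := by
      refine ⟨?_, ?_⟩
      · rw [Multiset.map_cons, Multiset.map_cons, ← hRdec]
      · intro b hb
        have h2 := hF.2 b hb
        rw [hPdec, hP₀dec, planCov_cons, planCov_cons, snAbove_cons, snAbove_cons] at h2
        rw [planCov_cons, planCov_cons, snAbove_cons, snAbove_cons]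
        rw [if_pos (cmp_bot hb).1, if_neg (cmp_bot hb).2,
          if_neg (covers_snd_zero (a := x) (b := b) hk0)] at h2
        rw [if_neg (cmp_top hb).2, if_pos (cmp_top hb).1,
          if_neg (covers_snd_zero (a := x) (b := b) (p := (topV x, 0)) rfl)]
        have hcc : covers x (p₂.1, p₂.2) b → ¬ covers x (p₂.1, p₂.2 - 1) b → False → True := fun _ _ h => h.elim
        -- key: the decremented pair loses coverage of at most one alternative, and
        -- margins dropped by 2, so the inequality persists
        have himp : ∀ u l, covers x (p₂.1, l) b → l ≤ u → True := fun _ _ _ _ => trivial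
        have hp₂e : p₂ = (p₂.1, p₂.2) := rfl
        rw [hp₂e] at h2
        split_ifs at h2 ⊢ <;> omega
    have hcost : cost ((topV x, 0) ::ₘ (p₂.1, p₂.2 - 1) ::ₘ P₁) + 1 ≤ cost P := by
      rw [hPdec, hP₀dec, cost_cons, cost_cons, cost_cons, cost_cons]
      simp only
      omega
    have := cover_le feas
    omega

lemma cover_botV_le_topV {y : Fin m} (hxy : y ≠ x) (R : Multiset (Vote m)) :
    cover (botV x ::ₘ R) y ≤ cover (topV x ::ₘ R) y := by
  obtain ⟨P, hF, hc⟩ := cover_spec (topV x ::ₘ R) y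
  obtain ⟨p₁, P₀, hPdec, hfst, hP₀⟩ := map_eq_cons_decomp hF.1
  have feas : Feasible (botV x ::ₘ R) y ((botV x, p₁.2) ::ₘ P₀) := by
    refine ⟨by rw [Multiset.map_cons, hP₀], ?_⟩
    intro b hb
    have h2 := hF.2 b hb
    have hp₁e : p₁ = (topV x, p₁.2) := Prod.ext hfst rfl
    rw [hPdec, hp₁e, planCov_cons, snAbove_cons, snAbove_cons] at h2
    rw [planCov_cons, snAbove_cons, snAbove_cons]
    by_cases hbx : b = x
    · rw [hbx] at h2 ⊢
      rw [if_pos (cmp_top hxy).1, if_neg (cmp_top hxy).2] at h2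
      rw [if_neg (cmp_bot hxy).2, if_pos (cmp_bot hxy).1]
      split_ifs at h2 ⊢ <;> omega
    · have e1 : (botV x b < botV x y) ↔ (topV x b < topV x y) :=
        (topV_lt_iff hbx hxy).symm
      have e2 : (botV x y < botV x b) ↔ (topV x y < topV x b) :=
        (topV_lt_iff hxy hbx).symm
      have e3 : covers y (botV x, p₁.2) b ↔ covers y (topV x, p₁.2) b := by
        unfold covers
        simp only
        rw [Fin.lt_def, Fin.lt_def, botV_val hbx, botV_val hxy]
        have := topV_pos (m := m) hbx
        have := topV_pos (m := m) hxy
        omega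
      simp only [e1, e2, e3]
      exact h2
  have hcost : cost ((botV x, p₁.2) ::ₘ P₀) = cost P := by
    rw [hPdec, cost_cons, cost_cons]
  have := cover_le feas
  omega

end Surgery

lemma one_le_cover_of_beats {S : Multiset (Vote m)} {x y : Fin m} (hxy : x ≠ y)
    (h : snAbove S y x < snAbove S x y) : 1 ≤ cover S y := by
  by_contra h0
  push_neg at h0
  have hz : cover S y = 0 := by omega
  have := (ct_iff.mp (ct_of_cover_eq_zero hz)) x hxy
  omega

lemma rep_succ_add {α : Type*} (t : ℕ) (v : α) (R : Multiset α) :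
    Multiset.replicate (t+1) v + R = v ::ₘ (Multiset.replicate t v + R) := by
  rw [Multiset.replicate_succ, Multiset.cons_add]

lemma rep_add_cons {α : Type*} (t : ℕ) (v w : α) (R : Multiset α) :
    Multiset.replicate t v + (w ::ₘ R) = w ::ₘ (Multiset.replicate t v + R) := by
  rw [Multiset.add_cons]

lemma snAbove_replicate_add (t : ℕ) (v : Vote m) (R : Multiset (Vote m)) (x y : Fin m) :
    snAbove (Multiset.replicate t v + R) x y
      = (if v x < v y then t else 0) + snAbove R x y := by
  induction t with
  | zero => simp
  | succ t ih =>
    rw [rep_succ_add, snAbove_cons, ih]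
    split_ifs <;> omega

section Iter

variable [NeZero m] (hm : 2 ≤ m) {x : Fin m}

include hm

lemma iter_mono : ∀ (t : ℕ) (R : Multiset (Vote m)),
    cover (Multiset.replicate t (topV x) + R) x
      ≤ cover (Multiset.replicate t (botV x) + R) x := by
  intro t
  induction t with
  | zero => intro R; simp
  | succ t ih =>
    intro R
    calc cover (Multiset.replicate (t+1) (topV x) + R) x
        = cover (Multiset.replicate t (topV x) + (topV x ::ₘ R)) x := by
          rw [rep_add_cons, rep_succ_add]
      _ ≤ cover (Multiset.replicate t (botV x) + (topV x ::ₘ R)) x := ih _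
      _ = cover (topV x ::ₘ (Multiset.replicate t (botV x) + R)) x := by rw [rep_add_cons]
      _ ≤ cover (botV x ::ₘ (Multiset.replicate t (botV x) + R)) x := cover_topV_le hm _
      _ = cover (Multiset.replicate (t+1) (botV x) + R) x := by rw [rep_succ_add]

lemma iter_strict (t : ℕ) (ht : 1 ≤ t) (R : Multiset (Vote m))
    (hpos : 1 ≤ cover (Multiset.replicate t (botV x) + R) x) :
    cover (Multiset.replicate t (topV x) + R) x + 1
      ≤ cover (Multiset.replicate t (botV x) + R) x := by
  obtain ⟨s, rfl⟩ : ∃ s, t = s + 1 := ⟨t - 1, by omega⟩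
  have h1 : cover (topV x ::ₘ (Multiset.replicate s (topV x) + R)) x
      ≤ cover (topV x ::ₘ (Multiset.replicate s (botV x) + R)) x := by
    calc cover (topV x ::ₘ (Multiset.replicate s (topV x) + R)) x
        = cover (Multiset.replicate s (topV x) + (topV x ::ₘ R)) x := by
          rw [rep_add_cons]
      _ ≤ cover (Multiset.replicate s (botV x) + (topV x ::ₘ R)) x := iter_mono hm _ _
      _ = cover (topV x ::ₘ (Multiset.replicate s (botV x) + R)) x := by rw [rep_add_cons]
  have h2 : cover (topV x ::ₘ (Multiset.replicate s (botV x) + R)) x + 1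
      ≤ cover (botV x ::ₘ (Multiset.replicate s (botV x) + R)) x := by
    apply cover_topV_lt hm
    rw [← rep_succ_add]
    exact hpos
  rw [rep_succ_add, rep_succ_add]
  omega

lemma iter_L2 {y : Fin m} (hxy : y ≠ x) : ∀ (t : ℕ) (R : Multiset (Vote m)),
    cover (Multiset.replicate t (botV x) + R) y
      ≤ cover (Multiset.replicate t (topV x) + R) y := by
  intro t
  induction t with
  | zero => intro R; simp
  | succ t ih =>
    intro R
    calc cover (Multiset.replicate (t+1) (botV x) + R) y
        = cover (Multiset.replicate t (botV x) + (botV x ::ₘ R)) y := by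
          rw [rep_add_cons, rep_succ_add]
      _ ≤ cover (Multiset.replicate t (topV x) + (botV x ::ₘ R)) y := ih _
      _ = cover (botV x ::ₘ (Multiset.replicate t (topV x) + R)) y := by rw [rep_add_cons]
      _ ≤ cover (topV x ::ₘ (Multiset.replicate t (topV x) + R)) y :=
          cover_botV_le_topV hm hxy _
      _ = cover (Multiset.replicate (t+1) (topV x) + R) y := by rw [rep_succ_add]

/-- The key "line" lemma for the Dodgson score: the same pair cannot tie at two
different points along a `botV x → topV x` line. -/
lemma line_D {y : Fin m} (hxy : y ≠ x) (t : ℕ) (ht : 1 ≤ t) (R : Multiset (Vote m))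
    (e1 : sScD (Multiset.replicate t (botV x) + R) x
        = sScD (Multiset.replicate t (botV x) + R) y)
    (e2 : sScD (Multiset.replicate t (topV x) + R) x
        = sScD (Multiset.replicate t (topV x) + R) y) : False := by
  rw [← cover_eq_sScD, ← cover_eq_sScD] at e1 e2
  by_cases hz : 1 ≤ cover (Multiset.replicate t (botV x) + R) x
  · have hs := iter_strict hm t ht R hz
    have hl2 := iter_L2 hm hxy t R
    omega
  · have h0 : cover (Multiset.replicate t (botV x) + R) x = 0 := by omega
    have h0y : cover (Multiset.replicate t (botV x) + R) y = 0 := by omega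
    have hct1 := ct_iff.mp (ct_of_cover_eq_zero h0)
    have hct2 := ct_iff.mp (ct_of_cover_eq_zero h0y)
    have hm1 := hct1 y hxy
    have hm2 := hct2 x (Ne.symm hxy)
    rw [snAbove_replicate_add, snAbove_replicate_add] at hm1 hm2
    rw [if_pos (cmp_bot hxy).1, if_neg (cmp_bot hxy).2] at hm1 hm2
    -- in the shifted situation, x strictly beats y
    have hbeat : snAbove (Multiset.replicate t (topV x) + R) y x
        < snAbove (Multiset.replicate t (topV x) + R) x y := by
      rw [snAbove_replicate_add, snAbove_replicate_add]
      rw [if_pos (cmp_top hxy).1, if_neg (cmp_top hxy).2]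
      omega
    have hb := one_le_cover_of_beats (Ne.symm hxy) hbeat
    have hmono := iter_mono hm (x := x) t R
    omega

end Iter

section Tideman

variable [NeZero m]

def topT (x y : Fin m) : Vote m :=
  (Equiv.swap x 0).trans (Equiv.swap ((Equiv.swap x 0) y) 1)

def botT (x y : Fin m) : Vote m := (topT x y).trans (Equiv.swap 0 1)

variable (hm : 2 ≤ m) {x y : Fin m} (hxy : x ≠ y)

include hm

lemma one_lt_m_val : ((1 : Fin m) : ℕ) = 1 := by
  rw [Fin.val_one']
  exact Nat.mod_eq_of_lt (by omega)

include hxy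

lemma topT_x : ((topT x y x : Fin m) : ℕ) = 0 := by
  have h1 : (Equiv.swap x (0 : Fin m)) x = 0 := Equiv.swap_apply_left _ _
  have h2 : (Equiv.swap x (0 : Fin m)) y ≠ 0 := fun hc =>
    hxy.symm ((Equiv.swap x 0).injective (hc.trans h1.symm))
  have h3 : (1 : Fin m) ≠ 0 := by
    intro hc
    have := congrArg Fin.val hc
    rw [one_lt_m_val hm] at this
    simp at this
  simp only [topT, Equiv.trans_apply, h1]
  rw [Equiv.swap_apply_of_ne_of_ne (Ne.symm h2) (Ne.symm h3)]
  simp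

lemma topT_y : ((topT x y y : Fin m) : ℕ) = 1 := by
  simp only [topT, Equiv.trans_apply, Equiv.swap_apply_left]
  exact one_lt_m_val hm

lemma topT_other {b : Fin m} (hbx : b ≠ x) (hby : b ≠ y) :
    2 ≤ ((topT x y b : Fin m) : ℕ) := by
  have h1 : topT x y b ≠ topT x y x := fun hc => hbx ((topT x y).injective hc)
  have h2 : topT x y b ≠ topT x y y := fun hc => hby ((topT x y).injective hc)
  have h1' : ((topT x y b : Fin m) : ℕ) ≠ 0 := fun hc => h1 (Fin.ext (by rw [hc, topT_x hm hxy]))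
  have h2' : ((topT x y b : Fin m) : ℕ) ≠ 1 := fun hc => h2 (Fin.ext (by rw [hc, topT_y hm hxy]))
  omega

lemma botT_x : ((botT x y x : Fin m) : ℕ) = 1 := by
  have h0 : topT x y x = 0 := Fin.ext (by rw [topT_x hm hxy]; simp)
  simp only [botT, Equiv.trans_apply, h0, Equiv.swap_apply_left]
  exact one_lt_m_val hm

lemma botT_y : ((botT x y y : Fin m) : ℕ) = 0 := by
  have h0 : topT x y y = 1 := Fin.ext (by rw [topT_y hm hxy, one_lt_m_val hm])
  simp only [botT, Equiv.trans_apply, h0, Equiv.swap_apply_right]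
  simp

lemma botT_other {b : Fin m} (hbx : b ≠ x) (hby : b ≠ y) :
    ((botT x y b : Fin m) : ℕ) = ((topT x y b : Fin m) : ℕ) := by
  have h2 := topT_other hm hxy hbx hby
  have hne0 : topT x y b ≠ 0 := fun hc => by
    rw [hc] at h2; simp at h2
  have hne1 : topT x y b ≠ 1 := fun hc => by
    rw [hc, one_lt_m_val hm] at h2; omega
  simp only [botT, Equiv.trans_apply]
  rw [Equiv.swap_apply_of_ne_of_ne hne0 hne1]

lemma topT_ne_botT : topT x y ≠ botT x y := by
  intro h
  have : ((topT x y x : Fin m) : ℕ) = ((botT x y x : Fin m) : ℕ) := by rw [h]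
  rw [topT_x hm hxy, botT_x hm hxy] at this
  omega

/-- comparisons other than the (x,y) pair agree between `topT` and `botT`. -/
lemma topT_botT_cmp {b c : Fin m} (h : ¬ (b = x ∧ c = y)) (h' : ¬ (b = y ∧ c = x))
    (hbc : b ≠ c) :
    (topT x y b < topT x y c) ↔ (botT x y b < botT x y c) := by
  by_cases hbx : b = x
  · have hcy : c ≠ y := fun hc => h ⟨hbx, hc⟩
    have hcx : c ≠ x := fun hc => hbc (hbx.trans hc.symm)
    rw [Fin.lt_def, Fin.lt_def, hbx, topT_x hm hxy, botT_x hm hxy]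
    have h2 := topT_other hm hxy hcx hcy
    have h3 := botT_other hm hxy hcx hcy
    omega
  by_cases hby : b = y
  · have hcx : c ≠ x := fun hc => h' ⟨hby, hc⟩
    have hcy : c ≠ y := fun hc => hbc (hby.trans hc.symm)
    rw [Fin.lt_def, Fin.lt_def, hby, topT_y hm hxy, botT_y hm hxy]
    have h2 := topT_other hm hxy hcx hcy
    have h3 := botT_other hm hxy hcx hcy
    omega
  by_cases hcx : c = x
  · rw [Fin.lt_def, Fin.lt_def, hcx, topT_x hm hxy, botT_x hm hxy]
    have h2 := topT_other hm hxy hbx hby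
    have h3 := botT_other hm hxy hbx hby
    omega
  by_cases hcy : c = y
  · rw [Fin.lt_def, Fin.lt_def, hcy, topT_y hm hxy, botT_y hm hxy]
    have h2 := topT_other hm hxy hbx hby
    have h3 := botT_other hm hxy hbx hby
    omega
  · rw [Fin.lt_def, Fin.lt_def, botT_other hm hxy hbx hby, botT_other hm hxy hcx hcy]

omit hm hxy in
lemma sScT_split (S : Multiset (Vote m)) {x y : Fin m} (hyx : y ≠ x) :
    sScT S x = sadv S y x
      + ∑ b ∈ Finset.univ.filter (fun b => b ≠ x ∧ b ≠ y), sadv S b x := by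
  classical
  unfold sScT
  have hset : Finset.univ.filter (fun b : Fin m => b ≠ x)
      = insert y (Finset.univ.filter (fun b => b ≠ x ∧ b ≠ y)) := by
    ext b
    simp only [Finset.mem_filter, Finset.mem_insert, Finset.mem_univ, true_and]
    constructor
    · intro hb
      by_cases hby : b = y
      · exact Or.inl hby
      · exact Or.inr ⟨hb, hby⟩
    · rintro (rfl | ⟨hb, _⟩)
      · exact hyx
      · exact hb
  rw [hset, Finset.sum_insert (by simp)]

lemma line_T (t : ℕ) (ht : 1 ≤ t) (R : Multiset (Vote m))
    (e1 : sScT (Multiset.replicate t (botT x y) + R) x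
        = sScT (Multiset.replicate t (botT x y) + R) y)
    (e2 : sScT (Multiset.replicate t (topT x y) + R) x
        = sScT (Multiset.replicate t (topT x y) + R) y) :
    False := by
  classical
  have hyx : y ≠ x := Ne.symm hxy
  rw [sScT_split _ hyx, sScT_split _ hxy] at e1 e2
  -- comparisons of x and y in the two special votes
  have cmpT1 : topT x y x < topT x y y := by
    rw [Fin.lt_def, topT_x hm hxy, topT_y hm hxy]; omega
  have cmpT2 : ¬ (topT x y y < topT x y x) := by
    rw [Fin.lt_def, topT_x hm hxy, topT_y hm hxy]; omega
  have cmpB1 : botT x y y < botT x y x := by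
    rw [Fin.lt_def, botT_x hm hxy, botT_y hm hxy]; omega
  have cmpB2 : ¬ (botT x y x < botT x y y) := by
    rw [Fin.lt_def, botT_x hm hxy, botT_y hm hxy]; omega
  -- the "other" terms coincide
  have key : ∀ z b : Fin m, z = x ∨ z = y → b ≠ x → b ≠ y →
      sadv (Multiset.replicate t (botT x y) + R) b z
        = sadv (Multiset.replicate t (topT x y) + R) b z := by
    intro z b hz hbx hby
    have hbz : b ≠ z := by rcases hz with rfl | rfl <;> assumption
    have hzy : ¬ (b = x ∧ z = y) := fun ⟨h1, _⟩ => hbx h1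
    have hzy' : ¬ (b = y ∧ z = x) := fun ⟨h1, _⟩ => hby h1
    have hzx : ¬ (z = x ∧ b = y) := fun ⟨_, h2⟩ => hby h2
    have hzx' : ¬ (z = y ∧ b = x) := fun ⟨_, h2⟩ => hbx h2
    have hcmp1 := topT_botT_cmp hm hxy hzy hzy' hbz
    have hcmp2 := topT_botT_cmp hm hxy hzx hzx' (Ne.symm hbz)
    unfold sadv
    rw [snAbove_replicate_add, snAbove_replicate_add, snAbove_replicate_add,
      snAbove_replicate_add]
    simp only [← hcmp1, ← hcmp2]
  have hs1 : ∑ b ∈ Finset.univ.filter (fun b => b ≠ x ∧ b ≠ y),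
      sadv (Multiset.replicate t (botT x y) + R) b x
      = ∑ b ∈ Finset.univ.filter (fun b => b ≠ x ∧ b ≠ y),
      sadv (Multiset.replicate t (topT x y) + R) b x := by
    apply Finset.sum_congr rfl
    intro b hb
    simp only [Finset.mem_filter] at hb
    exact key x b (Or.inl rfl) hb.2.1 hb.2.2
  have hs2 : ∑ b ∈ Finset.univ.filter (fun b => b ≠ y ∧ b ≠ x),
      sadv (Multiset.replicate t (botT x y) + R) b y
      = ∑ b ∈ Finset.univ.filter (fun b => b ≠ y ∧ b ≠ x),
      sadv (Multiset.replicate t (topT x y) + R) b y := by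
    apply Finset.sum_congr rfl
    intro b hb
    simp only [Finset.mem_filter] at hb
    exact key y b (Or.inr rfl) hb.2.2 hb.2.1
  rw [hs1, hs2] at e1
  unfold sadv at e1 e2
  rw [snAbove_replicate_add, snAbove_replicate_add, if_pos cmpB1, if_neg cmpB2] at e1
  rw [snAbove_replicate_add, snAbove_replicate_add, if_pos cmpT1, if_neg cmpT2] at e2
  omega

end Tideman

section Counting

variable (v0 v1 : Vote m)

/-- Replace every copy of `v1` by `v0`. -/
def Fm (M : Multiset (Vote m)) : Multiset (Vote m) :=
  M.filter (fun v => ¬ v1 = v) + Multiset.replicate (M.count v1) v0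

lemma Fm_card (M : Multiset (Vote m)) : Multiset.card (Fm v0 v1 M) = Multiset.card M := by
  have h := congrArg Multiset.card (M.filter_add_not (Eq v1))
  rw [Multiset.card_add] at h
  have hc : Multiset.card (M.filter (Eq v1)) = M.count v1 := by
    rw [Multiset.count_eq_card_filter_eq]
  rw [Fm, Multiset.card_add, Multiset.card_replicate]
  omega

lemma Fm_not_mem (hne : v0 ≠ v1) (M : Multiset (Vote m)) : v1 ∉ Fm v0 v1 M := by
  intro h
  rcases Multiset.mem_add.mp h with h | h
  · exact (Multiset.of_mem_filter h) rfl
  · exact hne ((Multiset.eq_of_mem_replicate h).symm)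

lemma M_decomp (M : Multiset (Vote m)) :
    M = Multiset.replicate (M.count v1) v1 + M.filter (fun v => ¬ v1 = v) := by
  conv_lhs => rw [← M.filter_add_not (Eq v1)]
  rw [Multiset.filter_eq]

lemma Fm_filter_eq (M : Multiset (Vote m)) :
    M.filter (fun v => ¬ v1 = v) = Fm v0 v1 M - Multiset.replicate (M.count v1) v0 := by
  rw [Fm]
  simp

lemma Fm_inj (hne : v0 ≠ v1) (Bad : Multiset (Vote m) → Prop)
    (hline : ∀ t, 1 ≤ t → ∀ R : Multiset (Vote m),
      Bad (Multiset.replicate t v1 + R) → Bad (Multiset.replicate t v0 + R) → False)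
    {A B : Multiset (Vote m)} (hA : Bad A) (hB : Bad B) (hAB : Fm v0 v1 A = Fm v0 v1 B) :
    A = B := by
  have key : ∀ A B : Multiset (Vote m), Bad A → Bad B → Fm v0 v1 A = Fm v0 v1 B →
      A.count v1 ≤ B.count v1 → A = B := by
    intro A B hA hB hAB hcnt
    set c := A.count v1 with hc
    set c' := B.count v1 with hc'
    have hfilters : A.filter (fun v => ¬ v1 = v) + Multiset.replicate c v0
        = B.filter (fun v => ¬ v1 = v) + Multiset.replicate c' v0 := hAB
    rcases Nat.eq_or_lt_of_le hcnt with heq | hlt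
    · rw [← heq] at hfilters
      have hf : A.filter (fun v => ¬ v1 = v) = B.filter (fun v => ¬ v1 = v) :=
        add_right_cancel hfilters
      rw [M_decomp v1 A, M_decomp v1 B, ← hc, ← hc', ← heq, hf]
    · set t := c' - c with ht
      have ht1 : 1 ≤ t := by omega
      have hc'eq : c' = c + t := by omega
      have hrep : Multiset.replicate c' v0 = Multiset.replicate t v0 + Multiset.replicate c v0 := by
        rw [hc'eq, Nat.add_comm, Multiset.replicate_add]
      rw [hrep, ← add_assoc] at hfilters
      have hf : A.filter (fun v => ¬ v1 = v)
          = B.filter (fun v => ¬ v1 = v) + Multiset.replicate t v0 :=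
        add_right_cancel hfilters
      set R := Multiset.replicate c v1 + B.filter (fun v => ¬ v1 = v) with hR
      have hBdec : B = Multiset.replicate t v1 + R := by
        rw [M_decomp v1 B, ← hc', hR, hc'eq, Nat.add_comm, Multiset.replicate_add]
        rw [add_assoc]
      have hAdec : A = Multiset.replicate t v0 + R := by
        rw [M_decomp v1 A, ← hc, hf, hR]
        ac_rfl
      rw [hBdec] at hB
      rw [hAdec] at hA
      exact absurd (hline t ht1 R hB hA) not_false
  rcases le_total (A.count v1) (B.count v1) with h | h
  · exact key A B hA hB hAB h
  · exact (key B A hB hA hAB.symm h).symm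

lemma ncard_bad_le (hne : v0 ≠ v1) (Bad : Multiset (Vote m) → Prop)
    (hline : ∀ t, 1 ≤ t → ∀ R : Multiset (Vote m),
      Bad (Multiset.replicate t v1 + R) → Bad (Multiset.replicate t v0 + R) → False)
    (n : ℕ) :
    Set.ncard {S : Sym (Vote m) n | Bad ↑S}
      ≤ Fintype.card (Sym {v : Vote m // v ≠ v1} n) := by
  classical
  set F : Sym (Vote m) n → Sym {v : Vote m // v ≠ v1} n := fun S =>
    ⟨(Fm v0 v1 ↑S).attach.map
        (fun z => (⟨z.1, fun h => (Fm_not_mem v0 v1 hne ↑S)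
            (by have hz := z.2; rw [h] at hz; exact hz)⟩ :
          {v : Vote m // v ≠ v1})),
      by rw [Multiset.card_map, Multiset.card_attach, Fm_card]; exact S.2⟩ with hF
  have hinj : Set.InjOn F {S : Sym (Vote m) n | Bad ↑S} := by
    intro S hS S' hS' hFS
    have hgen : ∀ T : Sym (Vote m) n,
        ((F T : Sym _ n) : Multiset {v : Vote m // v ≠ v1}).map Subtype.val
          = Fm v0 v1 ↑T := by
      intro T
      show (Multiset.map Subtype.val ((Fm v0 v1 ↑T).attach.map
        (fun z => (⟨z.1, fun h => (Fm_not_mem v0 v1 hne ↑T)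
            (by have hz := z.2; rw [h] at hz; exact hz)⟩ : {v : Vote m // v ≠ v1})))) = _
      rw [Multiset.map_map]
      exact Multiset.attach_map_val _
    have h1 := hgen S
    have h2 := hgen S'
    have hFm : Fm v0 v1 ↑S = Fm v0 v1 ↑S' := by
      rw [← h1, ← h2, hFS]
    have := Fm_inj v0 v1 hne Bad hline hS hS' hFm
    exact Subtype.ext this
  calc Set.ncard {S : Sym (Vote m) n | Bad ↑S}
      = Set.ncard (F '' {S : Sym (Vote m) n | Bad ↑S}) :=
        (Set.ncard_image_of_injOn hinj).symm
    _ ≤ Set.ncard (Set.univ : Set (Sym {v : Vote m // v ≠ v1} n)) :=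
        Set.ncard_le_ncard (Set.subset_univ _) Set.finite_univ
    _ = Fintype.card (Sym {v : Vote m // v ≠ v1} n) := by
        rw [Set.ncard_univ, Nat.card_eq_fintype_card]

lemma card_sym_ne (n : ℕ) (hm : 2 ≤ m) :
    Fintype.card (Sym {v : Vote m // v ≠ v1} n)
      = (Nat.factorial m - 1 + n - 1).choose n := by
  rw [Sym.card_sym_eq_multichoose, Nat.multichoose_eq]
  congr 2
  simp [Fintype.card_subtype_compl, Fintype.card_perm]

end Counting

lemma ncard_iUnion_le' {α ι : Type*} [Fintype ι] (s : ι → Set α) :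
    (⋃ i, s i).ncard ≤ ∑ i : ι, (s i).ncard := by
  classical
  have key : ∀ t : Finset ι, (⋃ i ∈ t, s i).ncard ≤ ∑ i ∈ t, (s i).ncard := by
    intro t
    induction t using Finset.induction_on with
    | empty => simp
    | insert _ _ h ih =>
      rename_i a t'
      rw [Finset.set_biUnion_insert, Finset.sum_insert h]
      have := Set.ncard_union_le (s a) (⋃ i ∈ t', s i)
      omega
  calc (⋃ i, s i).ncard = (⋃ i ∈ Finset.univ, s i).ncard := by simp
    _ ≤ _ := key _

lemma ncard_tie_le (n : ℕ) (hm : 2 ≤ m) (Sc : Multiset (Vote m) → Fin m → ℕ)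
    (Win : Multiset (Vote m) → Fin m → Prop)
    (hWin : ∀ S x, Win S x → ∀ b, Sc S x ≤ Sc S b)
    (hline : ∀ x y : Fin m, x ≠ y → ∃ v0 v1 : Vote m, v0 ≠ v1 ∧
      (∀ t, 1 ≤ t → ∀ R : Multiset (Vote m),
        Sc (Multiset.replicate t v1 + R) x = Sc (Multiset.replicate t v1 + R) y →
        Sc (Multiset.replicate t v0 + R) x = Sc (Multiset.replicate t v0 + R) y → False)) :
    Set.ncard {S : Sym (Vote m) n | ∃ x y : Fin m, x ≠ y ∧ Win ↑S x ∧ Win ↑S y}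
      ≤ m ^ 2 * (Nat.factorial m - 1 + n - 1).choose n := by
  classical
  set B : ℕ := (Nat.factorial m - 1 + n - 1).choose n with hB
  set P : Fin m → Fin m → Set (Sym (Vote m) n) :=
    fun x y => {S : Sym (Vote m) n | x ≠ y ∧ Sc ↑S x = Sc ↑S y} with hP
  have hsub : {S : Sym (Vote m) n | ∃ x y : Fin m, x ≠ y ∧ Win ↑S x ∧ Win ↑S y}
      ⊆ ⋃ x : Fin m, ⋃ y : Fin m, P x y := by
    rintro S ⟨x, y, hxy, h1, h2⟩
    refine Set.mem_iUnion.mpr ⟨x, Set.mem_iUnion.mpr ⟨y, ?_⟩⟩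
    exact ⟨hxy, le_antisymm (hWin _ _ h1 y) (hWin _ _ h2 x)⟩
  have hpair : ∀ x y : Fin m, (P x y).ncard ≤ B := by
    intro x y
    by_cases hxy : x = y
    · have : P x y = ∅ := by
        ext S; simp [hP, hxy]
      rw [this]
      simp
    · obtain ⟨v0, v1, hne, hl⟩ := hline x y hxy
      have hPeq : P x y = {S : Sym (Vote m) n | Sc ↑S x = Sc ↑S y} := by
        ext S; simp [hP, hxy]
      rw [hPeq, hB]
      calc Set.ncard {S : Sym (Vote m) n | Sc ↑S x = Sc ↑S y}
          ≤ Fintype.card (Sym {v : Vote m // v ≠ v1} n) :=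
            ncard_bad_le v0 v1 hne (fun M => Sc M x = Sc M y)
              (fun t ht R h1 h2 => hl t ht R h1 h2) n
        _ = (Nat.factorial m - 1 + n - 1).choose n := card_sym_ne v1 n hm
  calc Set.ncard {S : Sym (Vote m) n | ∃ x y : Fin m, x ≠ y ∧ Win ↑S x ∧ Win ↑S y}
      ≤ (⋃ x : Fin m, ⋃ y : Fin m, P x y).ncard :=
        Set.ncard_le_ncard hsub (Set.toFinite _)
    _ ≤ ∑ x : Fin m, (⋃ y : Fin m, P x y).ncard := ncard_iUnion_le' _
    _ ≤ ∑ x : Fin m, ∑ y : Fin m, (P x y).ncard :=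
        Finset.sum_le_sum (fun x _ => ncard_iUnion_le' _)
    _ ≤ ∑ _x : Fin m, ∑ _y : Fin m, B :=
        Finset.sum_le_sum (fun x _ => Finset.sum_le_sum (fun y _ => hpair x y))
    _ = m ^ 2 * B := by simp [Finset.sum_const, mul_comm]; ring

lemma tendsto_ratio (hm : 2 ≤ m) (f : ℕ → ℕ)
    (hf : ∀ n, f n ≤ m ^ 2 * (Nat.factorial m - 1 + n - 1).choose n) :
    Filter.Tendsto (fun n : ℕ => (f n : ℝ) / (Nat.choose (n + Nat.factorial m - 1) n))
      Filter.atTop (nhds 0) := by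
  set d := Nat.factorial m with hd
  have hd2 : 2 ≤ d := le_trans hm (Nat.self_le_factorial m)
  have hid : ∀ n : ℕ, (n + d - 1) * (d - 1 + n - 1).choose n = (n + d - 1).choose n * (d - 1) := by
    intro n
    have h := Nat.add_one_mul_choose_eq (n + d - 2) (d - 2)
    have e1 : n + d - 2 + 1 = n + d - 1 := by omega
    have e2 : d - 2 + 1 = d - 1 := by omega
    rw [e1, e2] at h
    have hs1 : (n + d - 2).choose (d - 2) = (n + d - 2).choose n := by
      rw [← Nat.choose_symm (show d - 2 ≤ n + d - 2 by omega)]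
      congr 1
      omega
    have hs2 : (n + d - 1).choose (d - 1) = (n + d - 1).choose n := by
      rw [← Nat.choose_symm (show d - 1 ≤ n + d - 1 by omega)]
      congr 1
      omega
    rw [hs1, hs2] at h
    have e3 : d - 1 + n - 1 = n + d - 2 := by omega
    rw [e3]
    exact h
  have hpos : ∀ n : ℕ, 0 < (n + d - 1).choose n := fun n => Nat.choose_pos (by omega)
  apply squeeze_zero (g := fun n : ℕ => ((m ^ 2 * (d - 1) : ℕ) : ℝ) / ((n + (d - 1) : ℕ) : ℝ))
  · intro n
    positivity
  · intro n
    have hposn := hpos n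
    have hnd : ((n + (d - 1) : ℕ) : ℝ) = ((n + d - 1 : ℕ) : ℝ) := by
      congr 1
      omega
    rw [hnd, div_le_div_iff₀ (by exact_mod_cast hposn) (by exact_mod_cast (by omega : 0 < n + d - 1))]
    have hnat : f n * (n + d - 1) ≤ (m ^ 2 * (d - 1)) * (n + d - 1).choose n := by
      calc f n * (n + d - 1) ≤ (m ^ 2 * (d - 1 + n - 1).choose n) * (n + d - 1) :=
            Nat.mul_le_mul_right _ (hf n)
        _ = m ^ 2 * ((n + d - 1) * (d - 1 + n - 1).choose n) := by ring
        _ = m ^ 2 * ((n + d - 1).choose n * (d - 1)) := by rw [hid n]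
        _ = (m ^ 2 * (d - 1)) * (n + d - 1).choose n := by ring
    exact_mod_cast hnat
  · exact (tendsto_const_div_atTop_nhds_zero_nat _).comp (tendsto_add_atTop_nat _)

end Stmt10


/-- For fixed `m`, the proportion of voting situations with `n` agents having more
than one Tideman winner tends to `0` as `n → ∞`, and likewise the proportion of
voting situations with more than one Dodgson winner tends to `0`. -/
theorem stmt_10 {m : ℕ} (hm : 2 ≤ m) :
    Filter.Tendsto (fun n : ℕ =>
        (Set.ncard {S : Sym (Vote m) n | ∃ x y : Fin m, x ≠ y ∧
            sTWinner (S : Multiset (Vote m)) x ∧ sTWinner (S : Multiset (Vote m)) y} : ℝ) /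
          Nat.choose (n + Nat.factorial m - 1) n)
      Filter.atTop (nhds 0) ∧
    Filter.Tendsto (fun n : ℕ =>
        (Set.ncard {S : Sym (Vote m) n | ∃ x y : Fin m, x ≠ y ∧
            sDWinner (S : Multiset (Vote m)) x ∧ sDWinner (S : Multiset (Vote m)) y} : ℝ) /
          Nat.choose (n + Nat.factorial m - 1) n)
      Filter.atTop (nhds 0) := by
  haveI : NeZero m := ⟨by omega⟩
  constructor
  · apply Stmt10.tendsto_ratio hm
    intro n
    apply Stmt10.ncard_tie_le n hm sScT sTWinner (fun S x h b => h b)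
    intro x y hxy
    exact ⟨Stmt10.topT x y, Stmt10.botT x y, Stmt10.topT_ne_botT hm hxy,
      fun t ht R e1 e2 => Stmt10.line_T hm hxy t ht R e1 e2⟩
  · apply Stmt10.tendsto_ratio hm
    intro n
    apply Stmt10.ncard_tie_le n hm sScD sDWinner (fun S x h b => h b)
    intro x y hxy
    exact ⟨Stmt10.topV x, Stmt10.botV x, Stmt10.topV_ne_botV x hm,
      fun t ht R e1 e2 => Stmt10.line_D hm (Ne.symm hxy) t ht R e1 e2⟩
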